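/- Any finite connected contractible configuration in Z^2 can be reduced to a single cell by a finite sequence of steps, each step removing either a leaf or a NE-corner or NW-corner that belongs to a 4-cycle, such that every intermediate configuration is connected and contractible. -/

import Mathlib

/-- Two grid cells are adjacent if their L1 (Manhattan) distance is 1. -/
def gridAdj (p q : ℤ × ℤ) : Prop :=
  |p.1 - q.1| + |p.2 - q.2| = 1

/-- Reachability within a set `S` of cells, along grid adjacency. -/
inductive ReachIn (S : Set (ℤ × ℤ)) : ℤ × ℤ → ℤ × ℤ → Prop
  | refl {p : ℤ × ℤ} (hp : p ∈ S) : ReachIn S p p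
  | tail {p q r : ℤ × ℤ} (h : ReachIn S p q) (hadj : gridAdj q r) (hr : r ∈ S) :
      ReachIn S p r

/-- A set of cells is connected (as induced subgraph of the grid). -/
def ConnectedConf (C : Set (ℤ × ℤ)) : Prop :=
  C.Nonempty ∧ ∀ p ∈ C, ∀ q ∈ C, ReachIn C p q

/-- A configuration is contractible if the subgraph of the grid induced by its
complement is connected. -/
def Contractible (C : Set (ℤ × ℤ)) : Prop :=
  ∀ p ∈ Cᶜ, ∀ q ∈ Cᶜ, ReachIn Cᶜ p q

/-- A leaf: a cell of `C` with exactly one neighbor in `C`. -/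
def IsLeaf (C : Set (ℤ × ℤ)) (v : ℤ × ℤ) : Prop :=
  v ∈ C ∧ ∃! w, w ∈ C ∧ gridAdj v w

/-- A NE-corner: a cell of `C` whose neighbors in `C` are exactly the cells
South and West of it. -/
def IsNECorner (C : Set (ℤ × ℤ)) (v : ℤ × ℤ) : Prop :=
  v ∈ C ∧ (v.1 - 1, v.2) ∈ C ∧ (v.1, v.2 - 1) ∈ C ∧
    (v.1 + 1, v.2) ∉ C ∧ (v.1, v.2 + 1) ∉ C

/-- A NW-corner: a cell of `C` whose neighbors in `C` are exactly the cells
South and East of it. -/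
def IsNWCorner (C : Set (ℤ × ℤ)) (v : ℤ × ℤ) : Prop :=
  v ∈ C ∧ (v.1 + 1, v.2) ∈ C ∧ (v.1, v.2 - 1) ∈ C ∧
    (v.1 - 1, v.2) ∉ C ∧ (v.1, v.2 + 1) ∉ C

/-- A hole of `C`: a finite connected component of the complement of `C`. -/
def IsHole (C H : Set (ℤ × ℤ)) : Prop :=
  H.Finite ∧ ∃ p ∈ Cᶜ, H = {q | ReachIn Cᶜ p q}

/-- One elimination step: remove a leaf, or a NE-corner belonging to a 4-cycle,
or a NW-corner belonging to a 4-cycle. -/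
def ElimStep (C D : Set (ℤ × ℤ)) : Prop :=
  ∃ v, D = C \ {v} ∧
    (IsLeaf C v ∨ (IsNECorner C v ∧ (v.1 - 1, v.2 - 1) ∈ C) ∨
      (IsNWCorner C v ∧ (v.1 + 1, v.2 - 1) ∈ C))


open Classical

lemma gridAdj_iff {p q : ℤ × ℤ} : gridAdj p q ↔
    (p.1 - q.1).natAbs + (p.2 - q.2).natAbs = 1 := by
  unfold gridAdj
  rw [Int.abs_eq_natAbs, Int.abs_eq_natAbs]
  omega

lemma gridAdj_symm {p q : ℤ × ℤ} (h : gridAdj p q) : gridAdj q p := by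
  rw [gridAdj_iff] at *; omega

lemma gridAdj_ne {p q : ℤ × ℤ} (h : gridAdj p q) : p ≠ q := by
  rw [gridAdj_iff] at h
  intro he; subst he; omega

lemma gridAdj_cases {p q : ℤ × ℤ} (h : gridAdj p q) :
    q = (p.1 + 1, p.2) ∨ q = (p.1 - 1, p.2) ∨ q = (p.1, p.2 + 1) ∨ q = (p.1, p.2 - 1) := by
  rw [gridAdj_iff] at h
  have h2 : (q.1 = p.1 + 1 ∧ q.2 = p.2) ∨ (q.1 = p.1 - 1 ∧ q.2 = p.2) ∨
      (q.1 = p.1 ∧ q.2 = p.2 + 1) ∨ (q.1 = p.1 ∧ q.2 = p.2 - 1) := by omega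
  rcases h2 with ⟨h1, h2⟩ | ⟨h1, h2⟩ | ⟨h1, h2⟩ | ⟨h1, h2⟩ <;>
    [left; (right; left); (right; right; left); (right; right; right)] <;>
    exact Prod.ext h1 h2

lemma gridAdj_E {p : ℤ × ℤ} : gridAdj p (p.1 + 1, p.2) := by rw [gridAdj_iff]; simp
lemma gridAdj_W {p : ℤ × ℤ} : gridAdj p (p.1 - 1, p.2) := by rw [gridAdj_iff]; simp
lemma gridAdj_N {p : ℤ × ℤ} : gridAdj p (p.1, p.2 + 1) := by rw [gridAdj_iff]; simp
lemma gridAdj_S {p : ℤ × ℤ} : gridAdj p (p.1, p.2 - 1) := by rw [gridAdj_iff]; simp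

namespace ReachIn

lemma mem_right {S : Set (ℤ × ℤ)} {p q : ℤ × ℤ} (h : ReachIn S p q) : q ∈ S := by
  induction h with
  | refl hp => exact hp
  | tail h hadj hr ih => exact hr

lemma mem_left {S : Set (ℤ × ℤ)} {p q : ℤ × ℤ} (h : ReachIn S p q) : p ∈ S := by
  induction h with
  | refl hp => exact hp
  | tail h hadj hr ih => exact ih

lemma mono {S T : Set (ℤ × ℤ)} (hST : S ⊆ T) {p q : ℤ × ℤ} (h : ReachIn S p q) :
    ReachIn T p q := by
  induction h with
  | refl hp => exact refl (hST hp)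
  | tail h hadj hr ih => exact tail ih hadj (hST hr)

lemma trans {S : Set (ℤ × ℤ)} {p q r : ℤ × ℤ} (h1 : ReachIn S p q) (h2 : ReachIn S q r) :
    ReachIn S p r := by
  induction h2 with
  | refl hp => exact h1
  | tail h hadj hr ih => exact tail ih hadj hr

lemma head {S : Set (ℤ × ℤ)} {p q r : ℤ × ℤ} (hp : p ∈ S) (hadj : gridAdj p q)
    (h : ReachIn S q r) : ReachIn S p r := by
  induction h with
  | refl hq => exact tail (refl hp) hadj hq
  | tail h hadj' hr ih => exact tail ih hadj' hr

lemma symm {S : Set (ℤ × ℤ)} {p q : ℤ × ℤ} (h : ReachIn S p q) : ReachIn S q p := by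
  induction h with
  | refl hp => exact refl hp
  | tail h hadj hr ih => exact head hr (gridAdj_symm hadj) ih

/-- closure into the component -/
lemma comp {S : Set (ℤ × ℤ)} {z c : ℤ × ℤ} (h : ReachIn S z c) :
    ReachIn {x | ReachIn S z x} z c := by
  induction h with
  | refl hp => exact refl (refl hp)
  | tail h hadj hr ih => exact tail ih hadj (h.tail hadj hr)

end ReachIn
/-! ### Winding numbers -/

/-- Signed crossing of the step `c → c'` with the upward ray of `p`. -/
def Xw (p c c' : ℤ × ℤ) : ℤ :=
  (if c.2 = c'.2 ∧ p.2 < c.2 ∧ c.1 = p.1 ∧ c'.1 = p.1 + 1 then 1 else 0)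
  - (if c.2 = c'.2 ∧ p.2 < c.2 ∧ c'.1 = p.1 ∧ c.1 = p.1 + 1 then 1 else 0)

/-- potential for horizontal ray moves -/
def Psi (p c : ℤ × ℤ) : ℤ := if c.1 = p.1 + 1 ∧ p.2 < c.2 then 1 else 0

lemma Xw_sub_horiz (p c c' : ℤ × ℤ) (hadj : gridAdj c c')
    (hc : c ≠ (p.1 + 1, p.2)) (hc' : c' ≠ (p.1 + 1, p.2)) :
    Xw p c c' - Xw (p.1 + 1, p.2) c c' = Psi p c' - Psi p c := by
  obtain ⟨px, py⟩ := p
  obtain ⟨cx, cy⟩ := c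
  rcases gridAdj_cases hadj with h | h | h | h <;> subst h <;>
    · simp only [Xw, Psi, ne_eq, Prod.mk.injEq, not_and, true_and, and_true, eq_self_iff_true] at hc hc' ⊢
      split_ifs <;> omega

lemma Xw_vert (p c c' : ℤ × ℤ) (hadj : gridAdj c c')
    (hc : c ≠ (p.1, p.2 + 1)) (hc' : c' ≠ (p.1, p.2 + 1)) :
    Xw p c c' = Xw (p.1, p.2 + 1) c c' := by
  obtain ⟨px, py⟩ := p
  obtain ⟨cx, cy⟩ := c
  rcases gridAdj_cases hadj with h | h | h | h <;> subst h <;>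
    · simp only [Xw, Psi, ne_eq, Prod.mk.injEq, not_and, true_and, and_true, eq_self_iff_true] at hc hc' ⊢
      split_ifs <;> omega

/-- Winding number of the closed walk `g` (of length `n`) around `p`. -/
def Wd (n : ℕ) (g : ℕ → ℤ × ℤ) (p : ℤ × ℤ) : ℤ :=
  ∑ i ∈ Finset.range n, Xw p (g i) (g (i + 1))

section walk

variable {n : ℕ} {g : ℕ → ℤ × ℤ}
  (hclosed : g n = g 0) (hadj : ∀ i < n, gridAdj (g i) (g (i + 1)))

include hclosed hadj in
lemma Wd_horiz {p : ℤ × ℤ} (havoid : ∀ i ≤ n, g i ≠ (p.1 + 1, p.2)) :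
    Wd n g p = Wd n g (p.1 + 1, p.2) := by
  have key : Wd n g p - Wd n g (p.1 + 1, p.2)
      = ∑ i ∈ Finset.range n, (Psi p (g (i + 1)) - Psi p (g i)) := by
    rw [Wd, Wd, ← Finset.sum_sub_distrib]
    refine Finset.sum_congr rfl ?_
    intro i hi
    rw [Finset.mem_range] at hi
    exact Xw_sub_horiz p (g i) (g (i + 1)) (hadj i hi) (havoid i hi.le) (havoid (i + 1) hi)
  rw [Finset.sum_range_sub (fun i => Psi p (g i)), hclosed] at key
  omega

include hadj in
lemma Wd_vert {p : ℤ × ℤ} (havoid : ∀ i ≤ n, g i ≠ (p.1, p.2 + 1)) :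
    Wd n g p = Wd n g (p.1, p.2 + 1) := by
  rw [Wd, Wd]
  refine Finset.sum_congr rfl ?_
  intro i hi
  rw [Finset.mem_range] at hi
  exact Xw_vert p (g i) (g (i + 1)) (hadj i hi) (havoid i hi.le) (havoid (i + 1) hi)

include hclosed hadj in
lemma Wd_adj {p q : ℤ × ℤ} (hpq : gridAdj p q)
    (hp : ∀ i ≤ n, g i ≠ p) (hq : ∀ i ≤ n, g i ≠ q) :
    Wd n g p = Wd n g q := by
  rcases gridAdj_cases hpq with h | h | h | h
  · rw [h]; exact Wd_horiz hclosed hadj (h ▸ hq)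
  · have he : p = (q.1 + 1, q.2) := by rw [h]; simp
    nth_rewrite 1 [he]
    exact (Wd_horiz hclosed hadj (he ▸ hp)).symm
  · rw [h]; exact Wd_vert hadj (h ▸ hq)
  · have he : p = (q.1, q.2 + 1) := by rw [h]; simp
    nth_rewrite 1 [he]
    exact (Wd_vert hadj (he ▸ hp)).symm

include hclosed hadj in
lemma Wd_reach {S : Set (ℤ × ℤ)} (hS : ∀ c ∈ S, ∀ i ≤ n, g i ≠ c)
    {p q : ℤ × ℤ} (h : ReachIn S p q) : Wd n g p = Wd n g q := by
  induction h with
  | refl hp => rfl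
  | tail h hadj' hr ih =>
      exact ih.trans (Wd_adj hclosed hadj hadj' (hS _ h.mem_right) (hS _ hr))

end walk

lemma reach_walk {S : Set (ℤ × ℤ)} {p q : ℤ × ℤ} (h : ReachIn S p q) :
    ∃ (n : ℕ) (g : ℕ → ℤ × ℤ), g 0 = p ∧ g n = q ∧
      (∀ i < n, gridAdj (g i) (g (i + 1))) ∧ (∀ i ≤ n, g i ∈ S) := by
  induction h with
  | refl hp => exact ⟨0, fun _ => p, rfl, rfl, by omega, fun i _ => hp⟩
  | tail h hadj hr ih =>
      rename_i q' r'
      obtain ⟨n, g, hg0, hgn, hadjw, hmem⟩ := ih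
      refine ⟨n + 1, fun i => if i = n + 1 then r' else g i, ?_, ?_, ?_, ?_⟩
      · show (if 0 = n + 1 then r' else g 0) = _
        rw [if_neg (by omega)]; exact hg0
      · show (if n + 1 = n + 1 then r' else g (n + 1)) = _
        rw [if_pos rfl]
      · intro i hi
        show gridAdj (if i = n + 1 then r' else g i) (if i + 1 = n + 1 then r' else g (i + 1))
        by_cases h1 : i + 1 = n + 1
        · have hin : i = n := by omega
          rw [if_pos h1, if_neg (by omega)]
          subst hin; rw [hgn]; exact hadj
        · rw [if_neg h1, if_neg (by omega)]
          exact hadjw i (by omega)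
      · intro i hi
        show (if i = n + 1 then r' else g i) ∈ S
        by_cases h1 : i = n + 1
        · rw [if_pos h1]; exact hr
        · rw [if_neg h1]; exact hmem i (by omega)
lemma adj_mk {x y x' y' : ℤ} (h : (x - x').natAbs + (y - y').natAbs = 1) :
    gridAdj (x, y) (x', y') := by
  rw [gridAdj_iff]; simpa using h

lemma Xw_eval (px py cx cy cx' cy' : ℤ) :
    Xw (px, py) (cx, cy) (cx', cy')
      = (if cy = cy' ∧ py < cy ∧ cx = px ∧ cx' = px + 1 then 1 else 0)
        - (if cy = cy' ∧ py < cy ∧ cx' = px ∧ cx = px + 1 then 1 else 0) := rfl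

/-- Key geometric lemma: in a contractible configuration whose cells all lie in
rows `≤ y`, if the South and West neighbours of the cell `(b,y) ∈ C` are joined
by a path in `C` avoiding `(b,y)`, then the South-West diagonal `(b-1,y-1)`
must belong to `C`. -/
lemma no_enclose (C : Set (ℤ × ℤ)) (hcontr : Contractible C) (b y : ℤ)
    (htop : ∀ c ∈ C, c.2 ≤ y) (hv : (b, y) ∈ C) (hd : (b - 1, y - 1) ∉ C)
    (hpath : ReachIn (C \ {(b, y)}) (b, y - 1) (b - 1, y)) : False := by
  obtain ⟨n₀, g₀, hg0, hgn, hadj₀, hmem₀⟩ := reach_walk hpath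
  set n : ℕ := n₀ + 2 with hndef
  set g : ℕ → ℤ × ℤ := fun i => if i ≤ n₀ then g₀ i else if i = n₀ + 1 then (b, y)
    else (b, y - 1) with hgdef
  have hgle : ∀ i ≤ n₀, g i = g₀ i := fun i hi => by simp [hgdef, hi]
  have hgtop : g (n₀ + 1) = (b, y) := by
    simp only [hgdef]
    rw [if_neg (by omega)]
    simp
  have hglast : g (n₀ + 2) = (b, y - 1) := by
    simp only [hgdef]
    rw [if_neg (by omega), if_neg (by omega)]
  have hclosed : g n = g 0 := by
    rw [hndef, hglast, hgle 0 (by omega), hg0]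
  have hadjw : ∀ i < n, gridAdj (g i) (g (i + 1)) := by
    intro i hi
    rcases Nat.lt_or_ge i n₀ with h1 | h1
    · rw [hgle i h1.le, hgle (i + 1) h1]
      exact hadj₀ i h1
    · rcases Nat.eq_or_lt_of_le h1 with h2 | h2
      · rw [hgle i h2.symm.le, h2.symm, hgn, hgtop]
        exact adj_mk (by omega)
      · have h3 : i = n₀ + 1 := by omega
        rw [h3, hgtop, hglast]
        exact adj_mk (by omega)
  have hgmem : ∀ i ≤ n, g i ∈ C := by
    intro i hi
    rcases le_or_gt i n₀ with h1 | h1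
    · rw [hgle i h1]; exact (hmem₀ i h1).1
    · rcases Nat.eq_or_lt_of_le h1 with h2 | h2
      · rw [← h2, hgtop]; exact hv
      · have h3 : i = n₀ + 2 := by omega
        rw [h3, hglast]
        exact hg0 ▸ (hmem₀ 0 (by omega)).1
  -- winding number around the diagonal cell is 1
  have hW1 : Wd n g (b - 1, y - 1) = 1 := by
    have hsplit : Wd n g (b - 1, y - 1)
        = (∑ i ∈ Finset.range n₀, Xw (b - 1, y - 1) (g i) (g (i + 1)))
          + Xw (b - 1, y - 1) (g n₀) (g (n₀ + 1))
          + Xw (b - 1, y - 1) (g (n₀ + 1)) (g (n₀ + 2)) := by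
      rw [Wd, hndef, Finset.sum_range_succ, Finset.sum_range_succ]
    have hz : ∀ i ∈ Finset.range n₀, Xw (b - 1, y - 1) (g i) (g (i + 1)) = 0 := by
      intro i hi
      rw [Finset.mem_range] at hi
      have m1 := hmem₀ i hi.le
      have m2 := hmem₀ (i + 1) hi
      rw [hgle i hi.le, hgle (i + 1) hi]
      have ht1 := htop _ m1.1
      have ht2 := htop _ m2.1
      have hne1 : g₀ i ≠ (b, y) := fun he => m1.2 he
      have hne2 : g₀ (i + 1) ≠ (b, y) := fun he => m2.2 he
      rcases hc : g₀ i with ⟨c1, c2⟩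
      rcases he : g₀ (i + 1) with ⟨e1, e2⟩
      rw [hc] at ht1 hne1
      rw [he] at ht2 hne2
      simp only [ne_eq, Prod.mk.injEq, not_and] at hne1 hne2
      rw [Xw_eval]
      split_ifs <;> omega
    rw [hsplit, Finset.sum_eq_zero hz, hgle n₀ le_rfl, hgn, hgtop, hglast, Xw_eval, Xw_eval]
    split_ifs <;> omega
  -- winding number above the top row is 0
  have hW0 : Wd n g (b - 1, y + 1) = 0 := by
    rw [Wd]
    refine Finset.sum_eq_zero ?_
    intro i hi
    rw [Finset.mem_range] at hi
    have ht1 := htop _ (hgmem i hi.le)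
    have ht2 := htop _ (hgmem (i + 1) hi)
    rcases hc : g i with ⟨c1, c2⟩
    rcases he : g (i + 1) with ⟨e1, e2⟩
    rw [hc] at ht1
    rw [he] at ht2
    rw [Xw_eval]
    split_ifs <;> omega
  -- but those two cells are joined in the complement
  have hu' : (b - 1, y + 1) ∉ C := fun hin => by have := htop _ hin; omega
  have hreach : ReachIn Cᶜ (b - 1, y - 1) (b - 1, y + 1) := hcontr _ hd _ hu'
  have hS : ∀ c ∈ Cᶜ, ∀ i ≤ n, g i ≠ c := by
    intro c hcC i hi he
    exact hcC (he ▸ hgmem i hi)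
  have := Wd_reach hclosed hadjw hS hreach
  rw [hW1, hW0] at this
  exact absurd this (by norm_num)
/-! ### Mirror symmetry -/

def mir (p : ℤ × ℤ) : ℤ × ℤ := (-p.1, p.2)

lemma mir_mir (p : ℤ × ℤ) : mir (mir p) = p := by simp [mir]

lemma gridAdj_mir {p q : ℤ × ℤ} (h : gridAdj p q) : gridAdj (mir p) (mir q) := by
  rw [gridAdj_iff] at h ⊢
  simp only [mir]
  omega

lemma reach_mir {S : Set (ℤ × ℤ)} {p q : ℤ × ℤ} (h : ReachIn S p q) :
    ReachIn (mir ⁻¹' S) (mir p) (mir q) := by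
  induction h with
  | refl hp => exact ReachIn.refl (by simpa [Set.mem_preimage, mir_mir] using hp)
  | tail h hadj hr ih =>
      exact ih.tail (gridAdj_mir hadj) (by simpa [Set.mem_preimage, mir_mir] using hr)

lemma contr_mir {C : Set (ℤ × ℤ)} (h : Contractible C) : Contractible (mir ⁻¹' C) := by
  intro p hp q hq
  have hp' : mir p ∈ Cᶜ := hp
  have hq' : mir q ∈ Cᶜ := hq
  have := reach_mir (h _ hp' _ hq')
  rw [mir_mir, mir_mir] at this
  exact this.mono (fun x hx => hx)

/-- Mirror version of `no_enclose`, for NW-corners. -/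
lemma no_enclose' (C : Set (ℤ × ℤ)) (hcontr : Contractible C) (a y : ℤ)
    (htop : ∀ c ∈ C, c.2 ≤ y) (hu : (a, y) ∈ C) (hd : (a + 1, y - 1) ∉ C)
    (hpath : ReachIn (C \ {(a, y)}) (a, y - 1) (a + 1, y)) : False := by
  have hset : mir ⁻¹' (C \ {((a : ℤ), y)}) = (mir ⁻¹' C) \ {((-a : ℤ), y)} := by
    ext x
    simp only [Set.mem_preimage, Set.mem_diff, Set.mem_singleton_iff]
    constructor
    · rintro ⟨h1, h2⟩
      refine ⟨h1, fun he => h2 ?_⟩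
      rw [he]; simp [mir]
    · rintro ⟨h1, h2⟩
      refine ⟨h1, fun he => h2 ?_⟩
      rw [← mir_mir x, he]; simp [mir]
  refine no_enclose (mir ⁻¹' C) (contr_mir hcontr) (-a) y ?_ ?_ ?_ ?_
  · intro c hc; exact htop (mir c) hc
  · show mir (-a, y) ∈ C
    simpa [mir] using hu
  · show mir (-a - 1, y - 1) ∉ C
    simp only [mir]
    rw [show (-(-a - 1) : ℤ) = a + 1 by ring]
    exact hd
  · have := reach_mir hpath
    rw [hset] at this
    have he1 : mir (a, y - 1) = ((-a : ℤ), y - 1) := rfl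
    have he2 : mir (a + 1, y) = ((-a : ℤ) - 1, y) := by simp [mir]; ring
    rwa [he1, he2] at this
/-! ### Removable cells and preservation of connectivity/contractibility -/

def Removable (C : Set (ℤ × ℤ)) (v : ℤ × ℤ) : Prop :=
  IsLeaf C v ∨ (IsNECorner C v ∧ (v.1 - 1, v.2 - 1) ∈ C) ∨
    (IsNWCorner C v ∧ (v.1 + 1, v.2 - 1) ∈ C)

/-- Paths avoiding a vertex all of whose neighbours can reach `z` without it. -/
lemma reach_avoid {S : Set (ℤ × ℤ)} {v z : ℤ × ℤ}
    (hnbr : ∀ c ∈ S, gridAdj v c → ReachIn (S \ {v}) c z)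
    {p q : ℤ × ℤ} (h : ReachIn S p q) (hp : p ≠ v) (hq : q ≠ v) :
    ReachIn (S \ {v}) p q := by
  have main : ∀ q', ReachIn S p q' → p ≠ v →
      (q' ≠ v → ReachIn (S \ {v}) p q') ∧ (q' = v → ReachIn (S \ {v}) p z) := by
    intro q' h' hp'
    induction h' with
    | refl hp0 =>
        exact ⟨fun _ => ReachIn.refl ⟨hp0, hp'⟩, fun he => absurd he hp'⟩
    | tail h1 hadj hr ih =>
        rename_i q1 r1
        obtain ⟨ih1, ih2⟩ := ih
        constructor
        · intro hr1
          by_cases hq1 : q1 = v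
          · have hpz := ih2 hq1
            have hrz : ReachIn (S \ {v}) r1 z := hnbr r1 hr (hq1 ▸ hadj)
            exact hpz.trans hrz.symm
          · exact (ih1 hq1).tail hadj ⟨hr, hr1⟩
        · intro hr1
          by_cases hq1 : q1 = v
          · rw [hq1, hr1] at hadj
            exact absurd rfl (gridAdj_ne hadj)
          · have hqz : ReachIn (S \ {v}) q1 z :=
              hnbr q1 h1.mem_right (gridAdj_symm (hr1 ▸ hadj))
            exact (ih1 hq1).trans hqz
  exact (main q h hp).1 hq
lemma ne_of_snd {p q : ℤ × ℤ} (h : p.2 ≠ q.2) : p ≠ q := fun he => h (he ▸ rfl)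
lemma ne_of_fst {p q : ℤ × ℤ} (h : p.1 ≠ q.1) : p ≠ q := fun he => h (he ▸ rfl)

lemma compl_remove {C : Set (ℤ × ℤ)} {v : ℤ × ℤ} {x : ℤ × ℤ} :
    x ∈ (C \ {v})ᶜ ↔ x ∉ C ∨ x = v := by
  simp only [Set.mem_compl_iff, Set.mem_diff, Set.mem_singleton_iff]
  tauto

lemma contr_remove {C : Set (ℤ × ℤ)} (hcontr : Contractible C) {v n : ℤ × ℤ}
    (hn : n ∉ C) (hadj : gridAdj v n) : Contractible (C \ {v}) := by
  have hCsub : Cᶜ ⊆ (C \ {v})ᶜ := fun x hx => compl_remove.2 (Or.inl hx)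
  have hop : ∀ x ∈ (C \ {v})ᶜ, ∃ x₀ ∈ Cᶜ, ReachIn (C \ {v})ᶜ x x₀ := by
    intro x hx
    rcases compl_remove.1 hx with h1 | h1
    · exact ⟨x, h1, ReachIn.refl hx⟩
    · refine ⟨n, hn, (ReachIn.refl hx).tail (h1 ▸ hadj) (hCsub hn)⟩
  intro p hp q hq
  obtain ⟨p₀, hp₀, hpr⟩ := hop p hp
  obtain ⟨q₀, hq₀, hqr⟩ := hop q hq
  exact (hpr.trans ((hcontr _ hp₀ _ hq₀).mono hCsub)).trans hqr.symm

lemma conn_remove {C : Set (ℤ × ℤ)} (hconn : ConnectedConf C) {v z : ℤ × ℤ}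
    (hz : z ∈ C) (hzv : z ≠ v)
    (hnbr : ∀ c ∈ C, gridAdj v c → ReachIn (C \ {v}) c z) :
    ConnectedConf (C \ {v}) := by
  refine ⟨⟨z, hz, hzv⟩, fun p hp q hq => ?_⟩
  exact reach_avoid hnbr (hconn.2 p hp.1 q hq.1) hp.2 hq.2

lemma nbr_NE {C : Set (ℤ × ℤ)} {v : ℤ × ℤ} (h : IsNECorner C v) :
    ∀ c ∈ C, gridAdj v c → c = (v.1 - 1, v.2) ∨ c = (v.1, v.2 - 1) := by
  intro c hc hadj
  rcases gridAdj_cases hadj with h1 | h1 | h1 | h1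
  · exact absurd (h1 ▸ hc) h.2.2.2.1
  · exact Or.inl h1
  · exact absurd (h1 ▸ hc) h.2.2.2.2
  · exact Or.inr h1

lemma nbr_NW {C : Set (ℤ × ℤ)} {v : ℤ × ℤ} (h : IsNWCorner C v) :
    ∀ c ∈ C, gridAdj v c → c = (v.1 + 1, v.2) ∨ c = (v.1, v.2 - 1) := by
  intro c hc hadj
  rcases gridAdj_cases hadj with h1 | h1 | h1 | h1
  · exact Or.inl h1
  · exact absurd (h1 ▸ hc) h.2.2.2.1
  · exact absurd (h1 ▸ hc) h.2.2.2.2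
  · exact Or.inr h1

lemma removable_remove {C : Set (ℤ × ℤ)} (hconn : ConnectedConf C)
    (hcontr : Contractible C) {v : ℤ × ℤ} (hrem : Removable C v) :
    ConnectedConf (C \ {v}) ∧ Contractible (C \ {v}) := by
  rcases hrem with hleaf | ⟨hcor, hdiag⟩ | ⟨hcor, hdiag⟩
  · obtain ⟨hvC, w, hw, huniq⟩ := hleaf
    have hwv : w ≠ v := (gridAdj_ne hw.2).symm
    constructor
    · refine conn_remove hconn hw.1 hwv ?_
      intro c hc hadj
      rw [huniq c ⟨hc, hadj⟩]
      exact ReachIn.refl ⟨hw.1, hwv⟩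
    · have hns : ¬((v.1, v.2 + 1) ∈ C ∧ (v.1, v.2 - 1) ∈ C) := by
        rintro ⟨h1, h2⟩
        have e1 := huniq _ ⟨h1, gridAdj_N⟩
        have e2 := huniq _ ⟨h2, gridAdj_S⟩
        rw [← e2] at e1
        have := congrArg Prod.snd e1
        simp at this
        omega
      by_cases h1 : (v.1, v.2 + 1) ∈ C
      · have h2 : (v.1, v.2 - 1) ∉ C := fun h2 => hns ⟨h1, h2⟩
        exact contr_remove hcontr h2 gridAdj_S
      · exact contr_remove hcontr h1 gridAdj_N
  · -- NE corner with diagonal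
    have hz : (v.1, v.2 - 1) ∈ C := hcor.2.2.1
    have hzv : (v.1, v.2 - 1) ≠ v := ne_of_snd (by show v.2 - 1 ≠ v.2; omega)
    constructor
    · refine conn_remove hconn hz hzv ?_
      intro c hc hadj
      rcases nbr_NE hcor c hc hadj with h1 | h1
      · subst h1
        have hfst : v.1 - 1 ≠ v.1 := by omega
        have h0 : ReachIn (C \ {v}) (v.1 - 1, v.2) (v.1 - 1, v.2) :=
          ReachIn.refl ⟨hcor.2.1, ne_of_fst hfst⟩
        have h1 := h0.tail (show gridAdj (v.1 - 1, v.2) (v.1 - 1, v.2 - 1) from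
          adj_mk (by omega)) ⟨hdiag, ne_of_fst hfst⟩
        exact h1.tail (show gridAdj (v.1 - 1, v.2 - 1) (v.1, v.2 - 1) from
          adj_mk (by omega)) ⟨hz, hzv⟩
      · subst h1; exact ReachIn.refl ⟨hz, hzv⟩
    · exact contr_remove hcontr hcor.2.2.2.2 gridAdj_N
  · -- NW corner with diagonal
    have hz : (v.1, v.2 - 1) ∈ C := hcor.2.2.1
    have hzv : (v.1, v.2 - 1) ≠ v := ne_of_snd (by show v.2 - 1 ≠ v.2; omega)
    constructor
    · refine conn_remove hconn hz hzv ?_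
      intro c hc hadj
      rcases nbr_NW hcor c hc hadj with h1 | h1
      · subst h1
        have hfst : v.1 + 1 ≠ v.1 := by omega
        have h0 : ReachIn (C \ {v}) (v.1 + 1, v.2) (v.1 + 1, v.2) :=
          ReachIn.refl ⟨hcor.2.1, ne_of_fst hfst⟩
        have h1 := h0.tail (show gridAdj (v.1 + 1, v.2) (v.1 + 1, v.2 - 1) from
          adj_mk (by omega)) ⟨hdiag, ne_of_fst hfst⟩
        exact h1.tail (show gridAdj (v.1 + 1, v.2 - 1) (v.1, v.2 - 1) from
          adj_mk (by omega)) ⟨hz, hzv⟩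
      · subst h1; exact ReachIn.refl ⟨hz, hzv⟩
    · exact contr_remove hcontr hcor.2.2.2.2 gridAdj_N
/-! ### Extremal cells -/

lemma exists_trmax {C : Set (ℤ × ℤ)} (hfin : C.Finite) (hne : C.Nonempty) :
    ∃ m ∈ C, ∀ c ∈ C, c.2 < m.2 ∨ (c.2 = m.2 ∧ c.1 ≤ m.1) := by
  obtain ⟨m, hm, hmax⟩ := Set.exists_max_image C
    (fun p => toLex (p.2, p.1) : ℤ × ℤ → ℤ ×ₗ ℤ) hfin hne
  refine ⟨m, hm, fun c hc => ?_⟩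
  have := hmax c hc
  rcases (Prod.Lex.le_iff).1 this with h | ⟨h1, h2⟩
  · exact Or.inl h
  · exact Or.inr ⟨h1, h2⟩

lemma exists_tlmax {C : Set (ℤ × ℤ)} (hfin : C.Finite) (hne : C.Nonempty) :
    ∃ m ∈ C, ∀ c ∈ C, c.2 < m.2 ∨ (c.2 = m.2 ∧ m.1 ≤ c.1) := by
  obtain ⟨m, hm, hmax⟩ := Set.exists_max_image C
    (fun p => toLex (p.2, -p.1) : ℤ × ℤ → ℤ ×ₗ ℤ) hfin hne
  refine ⟨m, hm, fun c hc => ?_⟩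
  have := hmax c hc
  rcases (Prod.Lex.le_iff).1 this with h | ⟨h1, h2⟩
  · exact Or.inl h
  · exact Or.inr ⟨h1, by have h2' : -c.1 ≤ -m.1 := h2; omega⟩

/-! ### Lifting removability from subconfigurations -/

lemma lift_removable {C D : Set (ℤ × ℤ)} {r : ℤ × ℤ} (hDC : D ⊆ C)
    (hnbr : ∀ c, gridAdj r c → (c ∈ C ↔ c ∈ D)) (hrem : Removable D r) :
    Removable C r := by
  rcases hrem with hleaf | ⟨hcor, hdiag⟩ | ⟨hcor, hdiag⟩
  · obtain ⟨hrD, w, hw, huniq⟩ := hleaf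
    exact Or.inl ⟨hDC hrD, w, ⟨(hnbr w hw.2).2 hw.1, hw.2⟩,
      fun x hx => huniq x ⟨(hnbr x hx.2).1 hx.1, hx.2⟩⟩
  · refine Or.inr (Or.inl ⟨⟨hDC hcor.1, ?_, ?_, ?_, ?_⟩, hDC hdiag⟩)
    · exact (hnbr _ gridAdj_W).2 hcor.2.1
    · exact (hnbr _ gridAdj_S).2 hcor.2.2.1
    · exact fun h => hcor.2.2.2.1 ((hnbr _ gridAdj_E).1 h)
    · exact fun h => hcor.2.2.2.2 ((hnbr _ gridAdj_N).1 h)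
  · refine Or.inr (Or.inr ⟨⟨hDC hcor.1, ?_, ?_, ?_, ?_⟩, hDC hdiag⟩)
    · exact (hnbr _ gridAdj_E).2 hcor.2.1
    · exact (hnbr _ gridAdj_S).2 hcor.2.2.1
    · exact fun h => hcor.2.2.2.1 ((hnbr _ gridAdj_W).1 h)
    · exact fun h => hcor.2.2.2.2 ((hnbr _ gridAdj_N).1 h)
lemma removable_mem {C : Set (ℤ × ℤ)} {v : ℤ × ℤ} (h : Removable C v) : v ∈ C := by
  rcases h with h | h | h
  · exact h.1
  · exact h.1.1
  · exact h.1.1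

/-- In the cut case: the side of `z` contains a removable cell of `C`. -/
lemma side {C : Set (ℤ × ℤ)} (hfin : C.Finite) (_hconn : ConnectedConf C)
    (hcontr : Contractible C) {v z z' : ℤ × ℤ} (hv : v ∈ C) (hz : z ∈ C) (hz' : z' ∈ C)
    (hzv : z ≠ v) (hz'v : z' ≠ v) (hadjz : gridAdj v z)
    (hncut : ¬ ReachIn (C \ {v}) z z')
    (IH : ∀ D : Set (ℤ × ℤ), D.Finite → D.ncard < C.ncard → ConnectedConf D →
      Contractible D → (∃ a ∈ D, ∃ b ∈ D, a ≠ b) →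
      ∃ r₁ r₂, r₁ ≠ r₂ ∧ Removable D r₁ ∧ Removable D r₂) :
    ∃ r, Removable C r ∧ ReachIn (C \ {v}) z r := by
  set S' := C \ {v} with hS'def
  set A := {x | ReachIn S' z x} with hAdef
  have hzA : z ∈ A := ReachIn.refl ⟨hz, hzv⟩
  have hAS : A ⊆ S' := fun x hx => hx.mem_right
  set CA := insert v A with hCAdef
  have hCAC : CA ⊆ C := Set.insert_subset hv (hAS.trans Set.diff_subset)
  have hfinA : CA.Finite := hfin.subset hCAC
  have hz'A : z' ∉ CA := by
    intro h
    rcases Set.mem_insert_iff.1 h with h1 | h1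
    · exact hz'v h1
    · exact hncut h1
  have hcard : CA.ncard < C.ncard :=
    Set.ncard_lt_ncard ⟨hCAC, fun hsub => hz'A (hsub hz')⟩ hfin
  have hvCA : v ∈ CA := Set.mem_insert _ _
  -- connectivity of CA
  have hreachCA : ∀ p ∈ CA, ReachIn CA z p := by
    intro p hp
    rcases Set.mem_insert_iff.1 hp with h1 | h1
    · subst h1
      exact (ReachIn.refl (Set.mem_insert_iff.2 (Or.inr hzA))).tail (gridAdj_symm hadjz) hvCA
    · exact (h1.comp).mono (fun x hx => Set.mem_insert_iff.2 (Or.inr hx))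
  have hconnCA : ConnectedConf CA :=
    ⟨⟨v, hvCA⟩, fun p hp q hq => (hreachCA p hp).symm.trans (hreachCA q hq)⟩
  -- contractibility of CA
  have hcontrCA : Contractible CA := by
    have hCsub : Cᶜ ⊆ CAᶜ := Set.compl_subset_compl.2 hCAC
    have hop : ∀ x ∈ CAᶜ, ∃ x₀ ∈ Cᶜ, ReachIn CAᶜ x x₀ := by
      intro x hx
      by_cases hxC : x ∈ C
      · have hxv : x ≠ v := fun he => hx (he ▸ hvCA)
        have hxA : x ∉ A := fun hh => hx (Set.mem_insert_iff.2 (Or.inr hh))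
        set B := {c | ReachIn S' x c} with hBdef
        have hBx : x ∈ B := ReachIn.refl ⟨hxC, hxv⟩
        have hBS : B ⊆ S' := fun c hc => hc.mem_right
        have hBA : ∀ c ∈ B, c ∉ A := by
          intro c hc hcA
          exact hxA (hcA.trans hc.symm)
        have hBCA : B ⊆ CAᶜ := by
          intro c hc hcCA
          rcases Set.mem_insert_iff.1 hcCA with h1 | h1
          · exact (hBS hc).2 h1
          · exact hBA c hc h1
        have hBfin : B.Finite := hfin.subset (hBS.trans Set.diff_subset)
        obtain ⟨m, hm, hmax⟩ := exists_trmax hBfin ⟨x, hBx⟩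
        have key : (m.1 + 1, m.2) ∉ C ∨ (m.1, m.2 + 1) ∉ C := by
          by_contra hcon
          push_neg at hcon
          obtain ⟨hE, hN⟩ := hcon
          have hEB : (m.1 + 1, m.2) ∉ B := by
            intro hEB
            rcases hmax _ hEB with h1 | h1
            · simp at h1
            · simp at h1
          have hNB : (m.1, m.2 + 1) ∉ B := by
            intro hNB
            rcases hmax _ hNB with h1 | h1
            · simp at h1
            · simp at h1
          have hEv : (m.1 + 1, m.2) = v := by
            by_contra hne
            exact hEB (hm.tail gridAdj_E ⟨hE, hne⟩)
          have hNv : (m.1, m.2 + 1) = v := by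
            by_contra hne
            exact hNB (hm.tail gridAdj_N ⟨hN, hne⟩)
          rw [← hNv] at hEv
          have := congrArg Prod.snd hEv
          simp at this
        have hmain : ∀ c₀ : ℤ × ℤ, c₀ ∉ C → gridAdj m c₀ → ∃ x₀ ∈ Cᶜ, ReachIn CAᶜ x x₀ := by
          intro c₀ hc₀ hadj₀
          refine ⟨c₀, hc₀, ?_⟩
          have hxm : ReachIn CAᶜ x m := (hm.comp).mono hBCA
          exact hxm.tail hadj₀ (hCsub hc₀)
        rcases key with h1 | h1
        · exact hmain _ h1 gridAdj_E
        · exact hmain _ h1 gridAdj_N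
      · exact ⟨x, hxC, ReachIn.refl hx⟩
    intro p hp q hq
    obtain ⟨p₀, hp₀, hpr⟩ := hop p hp
    obtain ⟨q₀, hq₀, hqr⟩ := hop q hq
    exact (hpr.trans ((hcontr _ hp₀ _ hq₀).mono hCsub)).trans hqr.symm
  -- apply the induction hypothesis
  obtain ⟨r₁, r₂, hr12, hrem₁, hrem₂⟩ := IH CA hfinA hcard hconnCA hcontrCA
    ⟨v, hvCA, z, Set.mem_insert_iff.2 (Or.inr hzA), (Ne.symm hzv)⟩
  have hpick : ∃ r, Removable CA r ∧ r ≠ v := by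
    by_cases h : r₁ = v
    · exact ⟨r₂, hrem₂, fun he => hr12 (h.trans he.symm)⟩
    · exact ⟨r₁, hrem₁, h⟩
  obtain ⟨r, hremr, hrv⟩ := hpick
  have hrA : r ∈ A := by
    rcases Set.mem_insert_iff.1 (removable_mem hremr) with h1 | h1
    · exact absurd h1 hrv
    · exact h1
  have hnbr : ∀ c, gridAdj r c → (c ∈ C ↔ c ∈ CA) := by
    intro c hadj
    constructor
    · intro hcC
      by_cases hcv : c = v
      · exact hcv ▸ hvCA
      · exact Set.mem_insert_iff.2 (Or.inr (hrA.tail hadj ⟨hcC, hcv⟩))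
    · exact fun h => hCAC h
  exact ⟨r, lift_removable hCAC hnbr hremr, hrA⟩
/-- Every finite connected contractible configuration with at least two cells
has two distinct removable cells. -/
lemma two_removable : ∀ N : ℕ, ∀ C : Set (ℤ × ℤ), C.ncard ≤ N → C.Finite →
    ConnectedConf C → Contractible C → (∃ a ∈ C, ∃ b ∈ C, a ≠ b) →
    ∃ r₁ r₂, r₁ ≠ r₂ ∧ Removable C r₁ ∧ Removable C r₂ := by
  intro N
  induction N with
  | zero =>
      intro C hcard hfin hconn hcontr htwo
      obtain ⟨a, ha, _⟩ := htwo
      rw [Nat.le_zero] at hcard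
      rw [Set.ncard_eq_zero hfin] at hcard
      exact absurd (hcard ▸ ha) (Set.notMem_empty a)
  | succ N ih =>
      intro C hcard hfin hconn hcontr htwo
      have IH : ∀ D : Set (ℤ × ℤ), D.Finite → D.ncard < C.ncard → ConnectedConf D →
          Contractible D → (∃ a ∈ D, ∃ b ∈ D, a ≠ b) →
          ∃ r₁ r₂, r₁ ≠ r₂ ∧ Removable D r₁ ∧ Removable D r₂ :=
        fun D hDfin hDcard hDconn hDcontr hDtwo =>
          ih D (by omega) hDfin hDconn hDcontr hDtwo
      obtain ⟨a₀, ha₀, b₀, hb₀, hab₀⟩ := htwo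
      obtain ⟨t, htC, htmax⟩ := exists_trmax hfin ⟨a₀, ha₀⟩
      have hnotup : ∀ c ∈ C, c.2 ≤ t.2 := by
        intro c hc
        rcases htmax c hc with h1 | h1
        · exact le_of_lt h1
        · exact le_of_eq h1.1
      have htE : (t.1 + 1, t.2) ∉ C := by
        intro h
        rcases htmax _ h with h1 | h1
        · have h2 : t.2 < t.2 := h1
          omega
        · have h2 : t.1 + 1 ≤ t.1 := h1.2
          omega
      have htN : (t.1, t.2 + 1) ∉ C := by
        intro h
        have h2 : t.2 + 1 ≤ t.2 := hnotup _ h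
        omega
      have hnbrt : ∀ c ∈ C, gridAdj t c → c = (t.1 - 1, t.2) ∨ c = (t.1, t.2 - 1) := by
        intro c hc hadj
        rcases gridAdj_cases hadj with h | h | h | h
        · exact absurd (h ▸ hc) htE
        · exact Or.inl h
        · exact absurd (h ▸ hc) htN
        · exact Or.inr h
      have hother : ∃ c ∈ C, c ≠ t := by
        by_cases h : a₀ = t
        · exact ⟨b₀, hb₀, fun he => hab₀ (by rw [h, he])⟩
        · exact ⟨a₀, ha₀, h⟩
      have hnbr_ex : (t.1 - 1, t.2) ∈ C ∨ (t.1, t.2 - 1) ∈ C := by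
        by_contra hcon
        push_neg at hcon
        obtain ⟨c, hc, hct⟩ := hother
        cases hconn.2 c hc t htC with
        | refl hp => exact hct rfl
        | tail h hadj hr =>
            rename_i q'
            rcases hnbrt q' h.mem_right (gridAdj_symm hadj) with h1 | h1
            · exact hcon.1 (h1 ▸ h.mem_right)
            · exact hcon.2 (h1 ▸ h.mem_right)
      have hs0t : ((t.1 : ℤ), t.2 - 1) ≠ t := ne_of_snd (by show t.2 - 1 ≠ t.2; omega)
      have hw0t : ((t.1 : ℤ) - 1, t.2) ≠ t := ne_of_fst (by show t.1 - 1 ≠ t.1; omega)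
      by_cases hsing : ∀ c ∈ C, c.2 = t.2 → c = t
      · -- t is alone in the top row, hence a leaf
        have hw0 : (t.1 - 1, t.2) ∉ C := by
          intro h
          have := hsing _ h rfl
          exact hw0t this
        have hs0C : (t.1, t.2 - 1) ∈ C := hnbr_ex.resolve_left hw0
        have hleaf : IsLeaf C t := by
          refine ⟨htC, (t.1, t.2 - 1), ⟨hs0C, gridAdj_S⟩, ?_⟩
          intro x hx
          rcases hnbrt x hx.1 hx.2 with h1 | h1
          · exact absurd (h1 ▸ hx.1) hw0
          · exact h1
        by_cases hbig : ∃ c ∈ C, c ≠ t ∧ c ≠ (t.1, t.2 - 1)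
        · obtain ⟨c, hc, hct, hcs⟩ := hbig
          set D := C \ {t} with hDdef
          obtain ⟨hDconn, hDcontr⟩ := removable_remove hconn hcontr (Or.inl hleaf)
          have hDfin : D.Finite := hfin.subset Set.diff_subset
          have hDcard : D.ncard < C.ncard :=
            Set.ncard_lt_ncard ⟨Set.diff_subset, fun hsub => (hsub htC).2 rfl⟩ hfin
          have hDtwo : ∃ a ∈ D, ∃ b ∈ D, a ≠ b :=
            ⟨(t.1, t.2 - 1), ⟨hs0C, hs0t⟩, c, ⟨hc, hct⟩, fun he => hcs he.symm⟩
          obtain ⟨r₁, r₂, hr12, hrem₁, hrem₂⟩ := IH D hDfin hDcard hDconn hDcontr hDtwo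
          have hpick : ∃ r, Removable D r ∧ r ≠ (t.1, t.2 - 1) := by
            by_cases h : r₁ = (t.1, t.2 - 1)
            · exact ⟨r₂, hrem₂, fun he => hr12 (h.trans he.symm)⟩
            · exact ⟨r₁, hrem₁, h⟩
          obtain ⟨r, hremr, hrs⟩ := hpick
          have hrD : r ∈ D := removable_mem hremr
          have hnbr : ∀ c', gridAdj r c' → (c' ∈ C ↔ c' ∈ D) := by
            intro c' hadj
            constructor
            · intro hc'
              refine ⟨hc', fun hc't => ?_⟩
              rw [Set.mem_singleton_iff] at hc't
              subst hc't
              rcases hnbrt r hrD.1 (gridAdj_symm hadj) with h1 | h1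
              · exact hw0 (h1 ▸ hrD.1)
              · exact hrs h1
            · exact fun h => h.1
          exact ⟨t, r, fun he => hrD.2 he.symm, Or.inl hleaf,
            lift_removable Set.diff_subset hnbr hremr⟩
        · -- C = {t, s0}
          have hCsub : ∀ c ∈ C, c = t ∨ c = (t.1, t.2 - 1) := by
            intro c hc
            by_contra hcon
            push_neg at hcon
            exact hbig ⟨c, hc, hcon.1, hcon.2⟩
          have hs0leaf : IsLeaf C (t.1, t.2 - 1) := by
            refine ⟨hs0C, t, ⟨htC, gridAdj_symm gridAdj_S⟩, ?_⟩
            intro x hx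
            rcases hCsub x hx.1 with h1 | h1
            · exact h1
            · exact absurd (h1 ▸ hx.2) (fun hh => gridAdj_ne hh (h1 ▸ rfl))
          exact ⟨t, (t.1, t.2 - 1), Ne.symm hs0t, Or.inl hleaf, Or.inl hs0leaf⟩
      · -- the top row has at least two cells
        push_neg at hsing
        obtain ⟨c₀, hc₀C, hc₀y, hc₀t⟩ := hsing
        obtain ⟨u, huC, humax⟩ := exists_tlmax hfin ⟨t, htC⟩
        have hu2 : u.2 = t.2 := by
          rcases htmax u huC with h1 | h1
          · rcases humax t htC with h2 | h2
            · omega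
            · omega
          · exact h1.1
        have hut : u ≠ t := by
          intro he
          subst he
          rcases humax c₀ hc₀C with h1 | h1
          · omega
          · rcases htmax c₀ hc₀C with h2 | h2
            · omega
            · exact hc₀t (Prod.ext (le_antisymm h2.2 h1.2) hc₀y)
        have huW : (u.1 - 1, u.2) ∉ C := by
          intro h
          rcases humax _ h with h1 | h1
          · have h2 : u.2 < u.2 := h1
            omega
          · have h2 : u.1 ≤ u.1 - 1 := h1.2
            omega
        have huN : (u.1, u.2 + 1) ∉ C := by
          intro h
          have h2 : u.2 + 1 ≤ t.2 := hnotup _ h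
          omega
        have hnbru : ∀ c ∈ C, gridAdj u c → c = (u.1 + 1, u.2) ∨ c = (u.1, u.2 - 1) := by
          intro c hc hadj
          rcases gridAdj_cases hadj with h | h | h | h
          · exact Or.inl h
          · exact absurd (h ▸ hc) huW
          · exact absurd (h ▸ hc) huN
          · exact Or.inr h
        have hnbr_ex_u : (u.1 + 1, u.2) ∈ C ∨ (u.1, u.2 - 1) ∈ C := by
          by_contra hcon
          push_neg at hcon
          cases hconn.2 t htC u huC with
          | refl hp => exact hut rfl.symm
          | tail h hadj hr =>
              rename_i q'
              rcases hnbru q' h.mem_right (gridAdj_symm hadj) with h1 | h1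
              · exact hcon.1 (h1 ▸ h.mem_right)
              · exact hcon.2 (h1 ▸ h.mem_right)
        have hsu : ((u.1 : ℤ), u.2 - 1) ≠ u := ne_of_snd (by show u.2 - 1 ≠ u.2; omega)
        have heu : ((u.1 : ℤ) + 1, u.2) ≠ u := ne_of_fst (by show u.1 + 1 ≠ u.1; omega)
        -- removable at t or an early pair
        have htrem : Removable C t ∨
            (∃ r₁ r₂, r₁ ≠ r₂ ∧ Removable C r₁ ∧ Removable C r₂) := by
          by_cases hw : (t.1 - 1, t.2) ∈ C
          · by_cases hs : (t.1, t.2 - 1) ∈ C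
            · have hcor : IsNECorner C t := ⟨htC, hw, hs, htE, htN⟩
              by_cases hdiag : (t.1 - 1, t.2 - 1) ∈ C
              · exact Or.inl (Or.inr (Or.inl ⟨hcor, hdiag⟩))
              · by_cases hreach : ReachIn (C \ {t}) (t.1, t.2 - 1) (t.1 - 1, t.2)
                · exact absurd hreach
                    (fun hre => no_enclose C hcontr t.1 t.2 hnotup htC hdiag hre)
                · obtain ⟨r, hr, hrz⟩ := side hfin hconn hcontr htC hs hw hs0t hw0t
                    gridAdj_S hreach IH
                  have hreach' : ¬ ReachIn (C \ {t}) (t.1 - 1, t.2) (t.1, t.2 - 1) :=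
                    fun h => hreach h.symm
                  obtain ⟨r', hr', hrz'⟩ := side hfin hconn hcontr htC hw hs hw0t hs0t
                    gridAdj_W hreach' IH
                  refine Or.inr ⟨r, r', fun he => hreach (hrz.trans (he ▸ hrz').symm), hr, hr'⟩
            · -- t is a leaf with neighbour (t.1-1, t.2)
              refine Or.inl (Or.inl ⟨htC, (t.1 - 1, t.2), ⟨hw, gridAdj_W⟩, ?_⟩)
              intro x hx
              rcases hnbrt x hx.1 hx.2 with h1 | h1
              · exact h1
              · exact absurd (h1 ▸ hx.1) hs
          · have hs : (t.1, t.2 - 1) ∈ C := hnbr_ex.resolve_left hw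
            refine Or.inl (Or.inl ⟨htC, (t.1, t.2 - 1), ⟨hs, gridAdj_S⟩, ?_⟩)
            intro x hx
            rcases hnbrt x hx.1 hx.2 with h1 | h1
            · exact absurd (h1 ▸ hx.1) hw
            · exact h1
        rcases htrem with htrem | hpair
        swap
        · exact hpair
        -- removable at u or an early pair
        have hurem : Removable C u ∨
            (∃ r₁ r₂, r₁ ≠ r₂ ∧ Removable C r₁ ∧ Removable C r₂) := by
          by_cases he : (u.1 + 1, u.2) ∈ C
          · by_cases hs : (u.1, u.2 - 1) ∈ C
            · have hcor : IsNWCorner C u := ⟨huC, he, hs, huW, huN⟩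
              by_cases hdiag : (u.1 + 1, u.2 - 1) ∈ C
              · exact Or.inl (Or.inr (Or.inr ⟨hcor, hdiag⟩))
              · by_cases hreach : ReachIn (C \ {u}) (u.1, u.2 - 1) (u.1 + 1, u.2)
                · refine absurd hreach (fun hre => no_enclose' C hcontr u.1 u.2 ?_ huC hdiag hre)
                  intro c hc
                  rw [hu2]
                  exact hnotup c hc
                · obtain ⟨r, hr, hrz⟩ := side hfin hconn hcontr huC hs he hsu heu
                    gridAdj_S hreach IH
                  have hreach' : ¬ ReachIn (C \ {u}) (u.1 + 1, u.2) (u.1, u.2 - 1) :=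
                    fun h => hreach h.symm
                  obtain ⟨r', hr', hrz'⟩ := side hfin hconn hcontr huC he hs heu hsu
                    gridAdj_E hreach' IH
                  refine Or.inr ⟨r, r', fun heq => hreach (hrz.trans (heq ▸ hrz').symm), hr, hr'⟩
            · refine Or.inl (Or.inl ⟨huC, (u.1 + 1, u.2), ⟨he, gridAdj_E⟩, ?_⟩)
              intro x hx
              rcases hnbru x hx.1 hx.2 with h1 | h1
              · exact h1
              · exact absurd (h1 ▸ hx.1) hs
          · have hs : (u.1, u.2 - 1) ∈ C := hnbr_ex_u.resolve_left he
            refine Or.inl (Or.inl ⟨huC, (u.1, u.2 - 1), ⟨hs, gridAdj_S⟩, ?_⟩)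
            intro x hx
            rcases hnbru x hx.1 hx.2 with h1 | h1
            · exact absurd (h1 ▸ hx.1) he
            · exact h1
        rcases hurem with hurem | hpair
        · exact ⟨t, u, Ne.symm hut, htrem, hurem⟩
        · exact hpair
lemma reduce_aux : ∀ N : ℕ, ∀ C : Set (ℤ × ℤ), C.ncard ≤ N → C.Finite →
    ConnectedConf C → Contractible C →
    ∃ (n : ℕ) (f : ℕ → Set (ℤ × ℤ)), f 0 = C ∧
      (∀ i ≤ n, (f i).Finite ∧ ConnectedConf (f i) ∧ Contractible (f i)) ∧
      (∀ i < n, ElimStep (f i) (f (i + 1))) ∧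
      ∃ v, f n = {v} := by
  intro N
  induction N with
  | zero =>
      intro C hcard hfin hconn hcontr
      obtain ⟨a, ha⟩ := hconn.1
      rw [Nat.le_zero, Set.ncard_eq_zero hfin] at hcard
      exact absurd (hcard ▸ ha) (Set.notMem_empty a)
  | succ N ih =>
      intro C hcard hfin hconn hcontr
      by_cases hone : ∃ v, C = {v}
      · refine ⟨0, fun _ => C, rfl, fun i _ => ⟨hfin, hconn, hcontr⟩, by omega, hone⟩
      · have htwo : ∃ a ∈ C, ∃ b ∈ C, a ≠ b := by
          by_contra hcon
          push_neg at hcon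
          obtain ⟨a, ha⟩ := hconn.1
          refine hone ⟨a, Set.eq_singleton_iff_unique_mem.2 ⟨ha, fun x hx => hcon x hx a ha⟩⟩
        obtain ⟨r₁, r₂, hr12, hrem₁, hrem₂⟩ :=
          two_removable (N + 1) C hcard hfin hconn hcontr htwo
        obtain ⟨hDconn, hDcontr⟩ := removable_remove hconn hcontr hrem₁
        have hDfin : (C \ {r₁}).Finite := hfin.subset Set.diff_subset
        have hDcard : (C \ {r₁}).ncard ≤ N := by
          have h1 : C \ {r₁} ⊂ C :=
            ⟨Set.diff_subset, fun hsub => (hsub (removable_mem hrem₁)).2 rfl⟩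
          have := Set.ncard_lt_ncard h1 hfin
          omega
        obtain ⟨n, f, hf0, hprops, hsteps, v', hfn⟩ := ih (C \ {r₁}) hDcard hDfin hDconn hDcontr
        refine ⟨n + 1, fun i => if i = 0 then C else f (i - 1), if_pos rfl, ?_, ?_, ?_⟩
        · intro i hi
          show (if i = 0 then C else f (i - 1)).Finite ∧
            ConnectedConf (if i = 0 then C else f (i - 1)) ∧
            Contractible (if i = 0 then C else f (i - 1))
          by_cases h : i = 0
          · rw [if_pos h]
            exact ⟨hfin, hconn, hcontr⟩
          · rw [if_neg h]
            exact hprops (i - 1) (by omega)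
        · intro i hi
          by_cases h : i = 0
          · subst h
            show ElimStep (if 0 = 0 then C else _) (if 0 + 1 = 0 then C else f (0 + 1 - 1))
            rw [if_pos rfl, if_neg (by omega)]
            show ElimStep C (f 0)
            rw [hf0]
            exact ⟨r₁, rfl, hrem₁⟩
          · show ElimStep (if i = 0 then C else f (i - 1)) (if i + 1 = 0 then C else f (i + 1 - 1))
            rw [if_neg h, if_neg (by omega)]
            have he : i + 1 - 1 = (i - 1) + 1 := by omega
            rw [he]
            exact hsteps (i - 1) (by omega)
        · refine ⟨v', ?_⟩
          show (if n + 1 = 0 then C else f (n + 1 - 1)) = {v'}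
          rw [if_neg (by omega)]
          exact hfn

/-- Any finite connected contractible configuration can be reduced to a single
cell by finitely many elimination steps (removal of a leaf, or of a NE- or
NW-corner belonging to a 4-cycle), with all intermediate configurations
connected and contractible. -/
theorem reduction_to_single_cell (C : Set (ℤ × ℤ)) (hfin : C.Finite)
    (hconn : ConnectedConf C) (hcontr : Contractible C) :
    ∃ (n : ℕ) (f : ℕ → Set (ℤ × ℤ)), f 0 = C ∧
      (∀ i ≤ n, (f i).Finite ∧ ConnectedConf (f i) ∧ Contractible (f i)) ∧
      (∀ i < n, ElimStep (f i) (f (i + 1))) ∧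
      ∃ v, f n = {v} := by
  exact reduce_aux C.ncard C le_rfl hfin hconn hcontr
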